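/- A binary word is balanced if and only if it is both upward digitally convex and downward digitally convex. -/

import Mathlib

/-- A word is primitive if it is not a proper power: `w = v^n` implies `n = 1`. -/
def Primitive {α : Type*} (w : List α) : Prop :=
  ∀ (v : List α) (n : ℕ), w = (List.replicate n v).flatten → n = 1

/-- A Lyndon word: nonempty and lexicographically strictly smaller than all
its proper nonempty suffixes. -/
def Lyndon {α : Type*} [LinearOrder α] (w : List α) : Prop :=
  w ≠ [] ∧ ∀ u v : List α, w = u ++ v → u ≠ [] → v ≠ [] → List.Lex (· < ·) w v

/-- A Lyndon word for the reversed order `1 < 0` on `Bool`. -/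
def LyndonRev (w : List Bool) : Prop :=
  w ≠ [] ∧ ∀ u v : List Bool, w = u ++ v → u ≠ [] → v ≠ [] → List.Lex (· > ·) w v

/-- A binary word is balanced if the numbers of `1`s in any two factors of the
same length differ by at most 1. (`false` plays the role of `0`, `true` of `1`.) -/
def Balanced01 (w : List Bool) : Prop :=
  ∀ u v : List Bool, u <:+: w → v <:+: w → u.length = v.length →
    (u.count true : ℤ) - (v.count true : ℤ) ≤ 1

/-- `w` has period `p`: `w[i] = w[i+p]` for all valid indices. -/
def HasPeriod (w : List Bool) (p : ℕ) : Prop :=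
  ∀ i : ℕ, i + p < w.length → w[i]? = w[i + p]?

/-- A central word: it has coprime periods `p`, `q` and length `p + q - 2`. -/
def Central (w : List Bool) : Prop :=
  ∃ p q : ℕ, Nat.Coprime p q ∧ HasPeriod w p ∧ HasPeriod w q ∧ w.length + 2 = p + q

/-- The lower Christoffel word of slope `b/a`: letter `i` is `1` (`true`) iff the
line `y = bx/(a+b)`... encoded via floor differences `⌊(i+1)b/(a+b)⌋ - ⌊ib/(a+b)⌋`. -/
def chr (a b : ℕ) : List Bool :=
  List.ofFn (fun i : Fin (a + b) =>
    decide ((i : ℕ) * b / (a + b) < ((i : ℕ) + 1) * b / (a + b)))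

/-- An (upward) digitally convex word: all factors of its Lyndon factorization
(for the order `0 < 1`) are balanced Lyndon words, i.e. primitive lower
Christoffel words. -/
def DC (w : List Bool) : Prop :=
  ∃ L : List (List Bool), L.flatten = w ∧ (∀ x ∈ L, Lyndon x ∧ Balanced01 x) ∧
    L.Chain' (fun a b => ¬ List.Lex (· < ·) a b)

/-- A downward digitally convex word: all factors of its Lyndon factorization
for the order `1 < 0` are balanced. -/
def DCdown (w : List Bool) : Prop :=
  ∃ L : List (List Bool), L.flatten = w ∧ (∀ x ∈ L, LyndonRev x ∧ Balanced01 x) ∧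
    L.Chain' (fun a b => ¬ List.Lex (· > ·) a b)

/-- `(u, v)` is the standard factorization of `u ++ v`: both parts nonempty and
`v` is the lexicographically least proper nonempty suffix of `u ++ v`. -/
def StdFact (u v : List Bool) : Prop :=
  u ≠ [] ∧ v ≠ [] ∧
    ∀ s : List Bool, s ≠ [] → s ≠ u ++ v → s <:+ u ++ v →
      s = v ∨ List.Lex (· < ·) v s

/-- A word is unbordered if it has no nonempty proper border. -/
def Unbordered (w : List Bool) : Prop :=
  ∀ u : List Bool, u <+: w → u <:+ w → u ≠ w → u = []

section AuxProofs
open List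
set_option linter.unreachableTactic false
set_option linter.unusedTactic false
set_option linter.unnecessarySeqFocus false
lemma lex_char {a b : List Bool} :
    List.Lex (·<·) a b ↔ (a <+: b ∧ a ≠ b) ∨
      ∃ s t t', a = s ++ false :: t ∧ b = s ++ true :: t' := by
  constructor
  · intro h
    induction h with
    | nil => exact Or.inl ⟨⟨_, rfl⟩, by simp⟩
    | @cons c l₁ l₂ h ih =>
      rcases ih with ⟨⟨r, hr⟩, hne⟩ | ⟨s, t, t', h1, h2⟩
      · exact Or.inl ⟨⟨r, by simp [← hr]⟩, by simpa using hne⟩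
      · exact Or.inr ⟨c :: s, t, t', by simp [h1], by simp [h2]⟩
    | @rel a₁ l₁ a₂ l₂ h =>
      have : a₁ = false ∧ a₂ = true := by revert h; revert a₁ a₂; decide
      exact Or.inr ⟨[], l₁, l₂, by simp [this.1], by simp [this.2]⟩
  · rintro (⟨⟨r, hr⟩, hne⟩ | ⟨s, t, t', rfl, rfl⟩)
    · subst hr
      rcases r with _ | ⟨c, r⟩
      · simp at hne
      · have : List.Lex (·<·) ([] : List Bool) (c :: r) := List.Lex.nil
        simpa using List.Lex.append_left _ this a
    · exact List.Lex.append_left _ (List.Lex.rel (by decide)) s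

lemma lex_append_indep {s t t' c d : List Bool} :
    List.Lex (·<·) ((s ++ false :: t) ++ c) ((s ++ true :: t') ++ d) :=
  lex_char.2 (Or.inr ⟨s, t ++ c, t' ++ d, by simp, by simp⟩)

lemma lyndon_append {u v : List Bool} (hu : Lyndon u) (hv : Lyndon v)
    (huv : List.Lex (·<·) u v) : Lyndon (u ++ v) := by
  have key : List.Lex (·<·) (u ++ v) v := by
    rcases lex_char.1 huv with ⟨⟨r, hr⟩, hne⟩ | ⟨s, t, t', h1, h2⟩
    · rcases r with _ | ⟨c, r⟩
      · simp at hr; exact absurd hr hne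
      · subst hr
        have := hv.2 u (c :: r) rfl hu.1 (by simp)
        simpa using List.Lex.append_left _ this u
    · rw [h1, h2]
      exact lex_char.2 (Or.inr ⟨s, t ++ (s ++ true :: t'), t', by simp, rfl⟩)
  refine ⟨by simp [hu.1], ?_⟩
  rintro x y hxy hx hy
  rcases List.append_eq_append_iff.1 hxy.symm with ⟨a', ha1, ha2⟩ | ⟨c', hc1, hc2⟩
  · -- u = x ++ a', y = a' ++ v
    rcases eq_or_ne a' [] with rfl | hne
    · have hxu : x = u := by simpa using ha1.symm
      rw [ha2, hxu] at *
      simpa [ha2] using key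
    · have hlex : List.Lex (·<·) u a' := hu.2 x a' ha1 hx hne
      rcases lex_char.1 hlex with ⟨⟨r, hr⟩, hneq⟩ | ⟨s, t, t', h1, h2⟩
      · exfalso
        have hl1 : a'.length ≤ u.length := by
          have := congrArg List.length ha1; simp at this; omega
        have hl2 : u.length ≤ a'.length := List.IsPrefix.length_le ⟨r, hr⟩
        have heq : u = a' := List.IsPrefix.eq_of_length ⟨r, hr⟩ (le_antisymm hl2 hl1)
        exact hneq heq
      · rw [ha2, h1, h2]
        exact lex_append_indep
  · -- x = u ++ c', v = c' ++ y
    rcases eq_or_ne c' [] with rfl | hne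
    · have : y = v := by simpa using hc2.symm
      rw [this]; exact key
    · have h2 : List.Lex (·<·) v y := hv.2 c' y hc2 hne hy
      exact List.lex_trans lt_trans key h2
lemma not_chain'_decomp {α : Type*} (R : α → α → Prop) :
    ∀ L : List α, ¬ L.Chain' R → ∃ A a b B, L = A ++ a :: b :: B ∧ ¬ R a b := by
  intro L
  induction L with
  | nil => intro h; exact absurd List.isChain_nil h
  | cons x T ih =>
    intro h
    cases T with
    | nil => exact absurd (List.isChain_singleton x) h
    | cons y T' =>
      rw [List.Chain', List.isChain_cons_cons] at h
      by_cases hxy : R x y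
      · have : ¬ (y :: T').Chain' R := fun hc => h ⟨hxy, hc⟩
        obtain ⟨A, a, b, B, hL, hR⟩ := ih this
        exact ⟨x :: A, a, b, B, by simp [hL], hR⟩
      · exact ⟨[], x, y, T', rfl, hxy⟩

lemma exists_fact (w : List Bool) :
    ∀ N (L : List (List Bool)), L.length ≤ N →
    (∀ x ∈ L, Lyndon x ∧ x <:+: w) → L.flatten = w →
    ∃ M : List (List Bool), M.flatten = w ∧ (∀ x ∈ M, Lyndon x ∧ x <:+: w) ∧
      M.Chain' (fun a b => ¬ List.Lex (·<·) a b) := by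
  intro N
  induction N with
  | zero =>
    intro L hL hmem hflat
    have hLnil : L = [] := List.length_eq_zero_iff.1 (Nat.le_zero.1 hL)
    subst hLnil
    exact ⟨[], hflat, hmem, List.isChain_nil⟩
  | succ n ih =>
    intro L hL hmem hflat
    by_cases hch : L.Chain' (fun a b => ¬ List.Lex (·<·) a b)
    · exact ⟨L, hflat, hmem, hch⟩
    · obtain ⟨A, a, b, B, hdec, hR⟩ := not_chain'_decomp _ L hch
      have hlex : List.Lex (·<·) a b := not_not.1 hR
      have ha := hmem a (by rw [hdec]; simp)
      have hb := hmem b (by rw [hdec]; simp)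
      have hab : Lyndon (a ++ b) := lyndon_append ha.1 hb.1 hlex
      have hinf : (a ++ b) <:+: w := by
        refine ⟨A.flatten, B.flatten, ?_⟩
        rw [← hflat, hdec]
        simp
      apply ih (A ++ (a ++ b) :: B)
      · have := congrArg List.length hdec
        simp at this ⊢
        omega
      · intro x hx
        simp only [List.mem_append, List.mem_cons] at hx
        rcases hx with h | h | h
        · exact hmem x (by rw [hdec]; simp [h])
        · exact h ▸ ⟨hab, hinf⟩
        · exact hmem x (by rw [hdec]; simp [h])
      · rw [← hflat, hdec]; simp
def mnot (w : List Bool) : List Bool := w.map not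

@[simp] lemma mnot_nil : mnot [] = [] := rfl
@[simp] lemma mnot_cons (a : Bool) (t : List Bool) : mnot (a :: t) = (!a) :: mnot t := rfl
@[simp] lemma mnot_append (u v : List Bool) : mnot (u ++ v) = mnot u ++ mnot v := by
  simp [mnot]
@[simp] lemma mnot_mnot (w : List Bool) : mnot (mnot w) = w := by
  induction w with
  | nil => rfl
  | cons a t ih => simp [ih]
@[simp] lemma mnot_length (w : List Bool) : (mnot w).length = w.length := by simp [mnot]
@[simp] lemma mnot_eq_nil {w : List Bool} : mnot w = [] ↔ w = [] := by
  cases w <;> simp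

lemma mnot_count (w : List Bool) : (mnot w).count true = w.length - w.count true := by
  induction w with
  | nil => simp
  | cons a t ih =>
    have := List.count_le_length (a := true) (l := t)
    cases a <;> simp [List.count_cons, ih] <;> omega

lemma lex_mnot {r s : Bool → Bool → Prop} (hrs : ∀ a b, r a b → s (!a) (!b)) :
    ∀ {u v : List Bool}, List.Lex r u v → List.Lex s (mnot u) (mnot v) := by
  intro u v h
  induction h with
  | nil => exact List.Lex.nil
  | cons h ih => exact List.Lex.cons ih
  | rel h => exact List.Lex.rel (hrs _ _ h)

lemma lex_gt_iff {u v : List Bool} :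
    List.Lex (·>·) u v ↔ List.Lex (·<·) (mnot u) (mnot v) := by
  constructor
  · exact lex_mnot (by decide)
  · intro h
    have := lex_mnot (r := (·<·)) (s := (·>·)) (by decide) h
    rwa [mnot_mnot, mnot_mnot] at this

lemma lyndonRev_iff {w : List Bool} : LyndonRev w ↔ Lyndon (mnot w) := by
  constructor
  · rintro ⟨hne, h⟩
    refine ⟨by simpa using hne, ?_⟩
    intro u v huv hu hv
    have hw : w = mnot u ++ mnot v := by
      have := congrArg mnot huv
      rwa [mnot_mnot, mnot_append] at this
    have := h (mnot u) (mnot v) hw (by simpa using hu) (by simpa using hv)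
    have := lex_gt_iff.1 this
    rwa [mnot_mnot] at this
  · rintro ⟨hne, h⟩
    refine ⟨by simpa using hne, ?_⟩
    intro u v huv hu hv
    have hw : mnot w = mnot u ++ mnot v := by rw [huv, mnot_append]
    have := h (mnot u) (mnot v) hw (by simpa using hu) (by simpa using hv)
    rw [lex_gt_iff]
    exact this

lemma infix_mnot {u w : List Bool} (h : u <:+: w) : mnot u <:+: mnot w := by
  obtain ⟨s, t, rfl⟩ := h
  exact ⟨mnot s, mnot t, by simp⟩

lemma balanced_mnot {w : List Bool} (h : Balanced01 w) : Balanced01 (mnot w) := by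
  intro u v hu hv hlen
  have hu' : mnot u <:+: w := by have := infix_mnot hu; rwa [mnot_mnot] at this
  have hv' : mnot v <:+: w := by have := infix_mnot hv; rwa [mnot_mnot] at this
  have hlen' : (mnot v).length = (mnot u).length := by simp [hlen]
  have hb := h (mnot v) (mnot u) hv' hu' hlen'
  rw [mnot_count, mnot_count] at hb
  have h1 := List.count_le_length (a := true) (l := u)
  have h2 := List.count_le_length (a := true) (l := v)
  omega

lemma balanced_infix {w u : List Bool} (h : Balanced01 w) (hu : u <:+: w) : Balanced01 u :=
  fun a b ha hb hl => h a b (ha.trans hu) (hb.trans hu) hl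

lemma singleton_lyndon (c : Bool) : Lyndon [c] := by
  refine ⟨by simp, ?_⟩
  intro u v huv hu hv
  exfalso
  have := congrArg List.length huv
  rcases u with _ | ⟨a, u⟩; · exact hu rfl
  rcases v with _ | ⟨b, v⟩; · exact hv rfl
  simp at this
  all_goals omega

lemma flatten_map_singleton (w : List Bool) : (w.map fun c => [c]).flatten = w := by
  induction w with
  | nil => simp
  | cons a t ih => simp [ih]

lemma flatten_map_mnot (L : List (List Bool)) : (L.map mnot).flatten = mnot L.flatten := by
  induction L with
  | nil => simp
  | cons a t ih => simp [ih]

lemma balanced_DC {w : List Bool} (h : Balanced01 w) : DC w := by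
  obtain ⟨M, hflat, hmem, hch⟩ := exists_fact w w.length (w.map fun c => [c])
    (by simp) (by
      intro x hx
      simp only [List.mem_map] at hx
      obtain ⟨c, hc, rfl⟩ := hx
      refine ⟨singleton_lyndon c, ?_⟩
      obtain ⟨s, t, hst⟩ := List.append_of_mem hc
      exact ⟨s, t, by rw [hst]; simp⟩)
    (flatten_map_singleton w)
  exact ⟨M, hflat, fun x hx => ⟨(hmem x hx).1, balanced_infix h (hmem x hx).2⟩, hch⟩

lemma DCdown_iff_DC_mnot {w : List Bool} : DCdown w ↔ DC (mnot w) := by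
  constructor
  · rintro ⟨L, hflat, hmem, hch⟩
    refine ⟨L.map mnot, by rw [flatten_map_mnot, hflat], ?_, ?_⟩
    · intro x hx
      simp only [List.mem_map] at hx
      obtain ⟨y, hy, rfl⟩ := hx
      exact ⟨lyndonRev_iff.1 (hmem y hy).1, balanced_mnot (hmem y hy).2⟩
    · rw [List.Chain', List.isChain_map]
      apply hch.imp
      intro a b hab hlex
      exact hab (lex_gt_iff.2 hlex)
  · rintro ⟨L, hflat, hmem, hch⟩
    refine ⟨L.map mnot, ?_, ?_, ?_⟩
    · rw [flatten_map_mnot, hflat, mnot_mnot]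
    · intro x hx
      simp only [List.mem_map] at hx
      obtain ⟨y, hy, rfl⟩ := hx
      refine ⟨lyndonRev_iff.2 (by rw [mnot_mnot]; exact (hmem y hy).1), balanced_mnot (hmem y hy).2⟩
    · rw [List.Chain', List.isChain_map]
      apply hch.imp
      intro a b hab hlex
      apply hab
      have := lex_gt_iff.1 hlex
      rwa [mnot_mnot, mnot_mnot] at this

lemma balanced_DCdown {w : List Bool} (h : Balanced01 w) : DCdown w :=
  DCdown_iff_DC_mnot.2 (balanced_DC (balanced_mnot h))
lemma first_diff : ∀ (t s : List Bool), t.length = s.length → t ≠ s →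
    ∃ (c d d' : List Bool) (x y : Bool), x ≠ y ∧ t = c ++ x :: d ∧ s = c ++ y :: d' ∧
      d.length = d'.length := by
  intro t
  induction t with
  | nil =>
    intro s hl hne
    have hs : s = [] := List.length_eq_zero_iff.1 (by simpa using hl.symm)
    exact absurd hs.symm hne
  | cons a t ih =>
    intro s hl hne
    rcases s with _ | ⟨b, s⟩
    · simp at hl
    · by_cases hab : a = b
      · subst hab
        have hne' : t ≠ s := fun h => hne (by rw [h])
        obtain ⟨c, d, d', x, y, hxy, h1, h2, h3⟩ := ih s (by simpa using hl) hne'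
        exact ⟨a :: c, d, d', x, y, hxy, by simp [h1], by simp [h2], h3⟩
      · exact ⟨[], t, s, a, b, hab, by simp, by simp, by simpa using hl⟩

lemma tail_infix {w : List Bool} {a : Bool} {u : List Bool} (h : (a :: u) <:+: w) :
    u <:+: w := ((List.suffix_cons a u).isInfix).trans h

lemma dropLast_infix {w u : List Bool} {d : Bool} (h : (u ++ [d]) <:+: w) :
    u <:+: w := (List.prefix_append u [d]).isInfix.trans h

lemma unbalanced_pair {w : List Bool} (h : ¬ Balanced01 w) :
    ∃ t : List Bool, (false :: (t ++ [false])) <:+: w ∧ (true :: (t ++ [true])) <:+: w := by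
  classical
  have hex : ∃ m, ∃ u v : List Bool, u <:+: w ∧ v <:+: w ∧ u.length = m ∧ v.length = m ∧
      v.count true + 2 ≤ u.count true := by
    simp only [Balanced01, not_forall] at h
    obtain ⟨u, v, hu, hv, hl, hc⟩ := h
    exact ⟨u.length, u, v, hu, hv, rfl, hl.symm, by omega⟩
  obtain ⟨m, hPm, hmin⟩ : ∃ m, (∃ u v : List Bool, u <:+: w ∧ v <:+: w ∧ u.length = m ∧
      v.length = m ∧ v.count true + 2 ≤ u.count true) ∧ ∀ k, k < m →
      ¬ (∃ u v : List Bool, u <:+: w ∧ v <:+: w ∧ u.length = k ∧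
      v.length = k ∧ v.count true + 2 ≤ u.count true) :=
    ⟨Nat.find hex, Nat.find_spec hex, fun k hk => Nat.find_min hex hk⟩
  obtain ⟨u, v, hu, hv, hul, hvl, hc⟩ := hPm
  have hcu := List.count_le_length (a := true) (l := u)
  have hcv := List.count_le_length (a := true) (l := v)
  have hm2 : 2 ≤ m := by omega
  -- decompose u, v at head and last
  rcases u with _ | ⟨a, u₁⟩; · simp at hul; omega
  rcases v with _ | ⟨b, v₁⟩; · simp at hvl; omega
  -- gap is exactly 2
  have hgap : (b :: v₁).count true + 2 = (a :: u₁).count true := by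
    by_contra hg
    have h3 : (b :: v₁).count true + 3 ≤ (a :: u₁).count true := by omega
    obtain ⟨v₂, d, hvd⟩ := (b :: v₁).eq_nil_or_concat.resolve_left (by simp)
    refine hmin (m - 1) (by omega) ⟨u₁, v₂, tail_infix hu, dropLast_infix (by
      rwa [← List.concat_eq_append, ← hvd]), by simp at hul; omega, by
        have := congrArg List.length hvd; simp at this hvl; omega, ?_⟩
    have hc1 : (a :: u₁).count true ≤ u₁.count true + 1 := by
      cases a <;> simp [List.count_cons] <;> omega
    have hc2 : v₂.count true ≤ (b :: v₁).count true := by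
      rw [hvd, List.concat_eq_append, List.count_append]; omega
    omega
  -- heads
  have hab : a = true ∧ b = false := by
    by_contra hg
    obtain ⟨v₂, d, hvd⟩ := (b :: v₁).eq_nil_or_concat.resolve_left (by simp)
    have huinf : u₁ <:+: w := tail_infix hu
    have hvinf : v₂ <:+: w := dropLast_infix (by rwa [← List.concat_eq_append, ← hvd])
    have hl1 : u₁.length = m - 1 := by simp at hul; omega
    have hl2 : v₂.length = m - 1 := by
      have := congrArg List.length hvd; simp at this hvl; omega
    have hc2 : v₂.count true ≤ (b :: v₁).count true := by
      rw [hvd, List.concat_eq_append, List.count_append]; omega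
    -- if not (a = true ∧ b = false) then count u₁ ≥ count v₁' + 2 still
    have : v₂.count true + 2 ≤ u₁.count true ∨ (v₁.count true + 2 ≤ u₁.count true ∧
        v₁.count true ≤ v₂.count true + 1) := by
      cases a <;> cases b <;> simp [List.count_cons] at hgap hg ⊢ <;> omega
    rcases this with hcase | hcase
    · exact hmin (m-1) (by omega) ⟨u₁, v₂, huinf, hvinf, hl1, hl2, hcase⟩
    · -- a = false, b = true case: count u₁ = count u, count v₁ = count v - 1
      -- then u₁ vs v₁ (tail) works too
      refine hmin (m-1) (by omega) ⟨u₁, v₁, huinf, tail_infix hv, hl1, by simp at hvl; omega, ?_⟩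
      omega
  obtain ⟨rfl, rfl⟩ := hab
  -- lasts
  obtain ⟨u₂, c, hud⟩ := u₁.eq_nil_or_concat.resolve_left (by simp at hul; intro hh; rw [hh] at hul; simp at hul; omega)
  obtain ⟨v₂, d, hvd⟩ := v₁.eq_nil_or_concat.resolve_left (by simp at hvl; intro hh; rw [hh] at hvl; simp at hvl; omega)
  rw [List.concat_eq_append] at hud hvd
  subst hud; subst hvd
  have hcd : c = true ∧ d = false := by
    by_contra hg
    -- drop last of u (gives true :: u₂) and head of v (gives v₂ ++ [d])
    have h1 : (true :: u₂) <:+: w := dropLast_infix (by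
      have : (true :: (u₂ ++ [c])) = (true :: u₂) ++ [c] := by simp
      rwa [this] at hu)
    have h2 : (false :: v₂) <:+: w := dropLast_infix (by
      have : (false :: (v₂ ++ [d])) = (false :: v₂) ++ [d] := by simp
      rwa [this] at hv)
    have hl1 : (true :: u₂).length = m - 1 := by simp at hul ⊢; omega
    have hl2 : (false :: v₂).length = m - 1 := by simp at hvl ⊢; omega
    refine hmin (m-1) (by omega) ⟨true :: u₂, false :: v₂, h1, h2, hl1, hl2, ?_⟩
    cases c <;> cases d <;> simp [List.count_cons, List.count_append] at hgap hg ⊢ <;> omega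
  obtain ⟨rfl, rfl⟩ := hcd
  -- now u = 1 u₂ 1, v = 0 v₂ 0, counts: u₂.count = v₂.count, lengths equal
  have hlen : u₂.length = v₂.length := by simp at hul hvl; omega
  have hcnt : u₂.count true = v₂.count true := by
    simp [List.count_cons, List.count_append] at hgap; omega
  by_cases heq : u₂ = v₂
  · subst heq
    exact ⟨u₂, hv, hu⟩
  · exfalso
    obtain ⟨e, f, f', x, y, hxy, hx, hy, hff⟩ := first_diff u₂ v₂ hlen heq
    have hxy' : (x = true ∧ y = false) ∨ (x = false ∧ y = true) := by
      cases x <;> cases y <;> simp at hxy ⊢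
    rcases hxy' with ⟨rfl, rfl⟩ | ⟨rfl, rfl⟩
    · -- prefixes 1 e 1 and 0 e 0, length |e| + 2 < m
      have h1 : (true :: (e ++ [true])) <:+: w := by
        refine (List.IsPrefix.isInfix ?_).trans hu
        rw [hx]
        refine ⟨f ++ [true], by simp⟩
      have h2 : (false :: (e ++ [false])) <:+: w := by
        refine (List.IsPrefix.isInfix ?_).trans hv
        rw [hy]
        refine ⟨f' ++ [false], by simp⟩
      have hle : e.length + 2 < m := by
        have := congrArg List.length hx; simp at this hul; omega
      refine hmin (e.length + 2) hle ⟨true :: (e ++ [true]), false :: (e ++ [false]), h1, h2,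
        by simp, by simp, ?_⟩
      simp [List.count_cons, List.count_append]
    · -- suffixes f ++ [1] of u and f' ++ [0] of v
      have h1 : (f ++ [true]) <:+: w := by
        refine (List.IsSuffix.isInfix ?_).trans hu
        rw [hx]
        refine ⟨true :: e ++ [false], by simp⟩
      have h2 : (f' ++ [false]) <:+: w := by
        refine (List.IsSuffix.isInfix ?_).trans hv
        rw [hy]
        refine ⟨false :: e ++ [true], by simp⟩
      have hle : f.length + 1 < m := by
        have := congrArg List.length hx; simp at this hul; omega
      have hcf : f.count true = f'.count true + 1 := by
        have h1 := congrArg (List.count true) hx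
        have h2 := congrArg (List.count true) hy
        simp [List.count_append, List.count_cons] at h1 h2
        omega
      refine hmin (f.length + 1) hle ⟨f ++ [true], f' ++ [false], h1, h2, by simp,
        by simp; omega, ?_⟩
      simp [List.count_append]
      omega
def psiA (x : List Bool) : List Bool := x.flatMap (fun b => if b then [false, true] else [false])
def psiB (x : List Bool) : List Bool := x.flatMap (fun b => if b then [true] else [false, true])

@[simp] lemma psiA_nil : psiA [] = [] := rfl
@[simp] lemma psiB_nil : psiB [] = [] := rfl
@[simp] lemma psiA_cons (a : Bool) (x : List Bool) :
    psiA (a :: x) = (if a then [false, true] else [false]) ++ psiA x := rfl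
@[simp] lemma psiB_cons (a : Bool) (x : List Bool) :
    psiB (a :: x) = (if a then [true] else [false, true]) ++ psiB x := rfl
@[simp] lemma psiA_append (x y : List Bool) : psiA (x ++ y) = psiA x ++ psiA y := by
  simp [psiA]
@[simp] lemma psiB_append (x y : List Bool) : psiB (x ++ y) = psiB x ++ psiB y := by
  simp [psiB]

lemma psiA_length (x : List Bool) : (psiA x).length = x.length + x.count true := by
  induction x with
  | nil => simp
  | cons a t ih => cases a <;> simp [ih, List.count_cons] <;> omega

lemma psiA_count (x : List Bool) : (psiA x).count true = x.count true := by
  induction x with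
  | nil => simp
  | cons a t ih => cases a <;> simp [ih, List.count_cons]

lemma psiB_length (x : List Bool) : (psiB x).length = x.length + x.count false := by
  induction x with
  | nil => simp
  | cons a t ih => cases a <;> simp [ih, List.count_cons] <;> omega

lemma psiB_count (x : List Bool) : (psiB x).count true = x.length := by
  induction x with
  | nil => simp
  | cons a t ih => cases a <;> simp [ih, List.count_cons]

lemma psiA_ne_nil {x : List Bool} (h : x ≠ []) : psiA x ≠ [] := by
  cases x with
  | nil => exact absurd rfl h
  | cons a t => cases a <;> simp

lemma psiB_ne_nil {x : List Bool} (h : x ≠ []) : psiB x ≠ [] := by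
  cases x with
  | nil => exact absurd rfl h
  | cons a t => cases a <;> simp

lemma psiA_head {x : List Bool} (h : x ≠ []) : ∃ t, psiA x = false :: t := by
  cases x with
  | nil => exact absurd rfl h
  | cons a t => cases a <;> simp

lemma psiB_last {x : List Bool} (h : x ≠ []) : ∃ t, psiB x = t ++ [true] := by
  induction x with
  | nil => exact absurd rfl h
  | cons a t ih =>
    rcases eq_or_ne t [] with rfl | hne
    · cases a
      · exact ⟨[false], rfl⟩
      · exact ⟨[], rfl⟩
    · obtain ⟨r, hr⟩ := ih hne
      cases a
      · exact ⟨false :: true :: r, by simp [hr]⟩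
      · exact ⟨true :: r, by simp [hr]⟩

lemma psiB_head_true {x : List Bool} {r : List Bool} (h : x = true :: r) :
    ∃ t, psiB x = true :: t := by subst h; simp

lemma psiA_lex {x y : List Bool} (h : List.Lex (·<·) x y) :
    List.Lex (·<·) (psiA x) (psiA y) := by
  induction h with
  | @nil a l => 
    obtain ⟨t, ht⟩ := psiA_head (x := a :: l) (by simp)
    rw [ht]; exact List.Lex.nil
  | @cons a l₁ l₂ h ih =>
    simpa using List.Lex.append_left _ ih (if a then [false, true] else [false])
  | @rel a₁ l₁ a₂ l₂ h =>
    have : a₁ = false ∧ a₂ = true := by revert h; revert a₁ a₂; decide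
    obtain ⟨rfl, rfl⟩ := this
    simp only [psiA_cons, if_true, if_false]
    refine List.Lex.cons ?_  -- after common [false]
    rcases eq_or_ne l₁ [] with rfl | hne
    · exact List.Lex.nil
    · obtain ⟨t, ht⟩ := psiA_head hne
      rw [ht]
      exact List.Lex.rel (by decide)

lemma psiB_lex {x y : List Bool} (h : List.Lex (·<·) x y) :
    List.Lex (·<·) (psiB x) (psiB y) := by
  induction h with
  | @nil a l =>
    have hne : psiB (a :: l) ≠ [] := psiB_ne_nil (by simp)
    rcases hpb : psiB (a :: l) with _ | ⟨c, t⟩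
    · exact absurd hpb hne
    · exact List.Lex.nil
  | @cons a l₁ l₂ h ih =>
    simpa using List.Lex.append_left _ ih (if a then [true] else [false, true])
  | @rel a₁ l₁ a₂ l₂ h =>
    have : a₁ = false ∧ a₂ = true := by revert h; revert a₁ a₂; decide
    obtain ⟨rfl, rfl⟩ := this
    simp only [psiB_cons, if_true, if_false]
    exact List.Lex.rel (by decide)

lemma parseA : ∀ N (l : List Bool), l.length ≤ N → ¬ ([true, true] <:+: l) →
    (∀ r, l ≠ true :: r) → ∃ x, l = psiA x := by
  intro N
  induction N with
  | zero =>
    intro l hl _ _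
    have : l = [] := List.length_eq_zero_iff.1 (Nat.le_zero.1 hl)
    exact ⟨[], by simp [this]⟩
  | succ n ih =>
    intro l hl h11 hhd
    rcases l with _ | ⟨a, r⟩
    · exact ⟨[], rfl⟩
    rcases a with _ | _
    · rcases r with _ | ⟨b, r'⟩
      · exact ⟨[false], rfl⟩
      rcases b with _ | _
      · -- false :: false :: r'
        obtain ⟨x, hx⟩ := ih (false :: r') (by simp at hl ⊢; omega)
          (fun hh => h11 (hh.trans ⟨[false], [], by simp⟩))
          (fun s hs => by simp at hs)
        exact ⟨false :: x, by simp [psiA_cons, ← hx]⟩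
      · -- false :: true :: r'
        have hr' : ∀ s, r' ≠ true :: s := by
          intro s hs
          exact h11 (by rw [hs]; exact ⟨[false], s, by simp⟩)
        obtain ⟨x, hx⟩ := ih r' (by simp at hl ⊢; omega)
          (fun hh => h11 (hh.trans ⟨[false, true], [], by simp⟩)) hr'
        exact ⟨true :: x, by simp [psiA_cons, ← hx]⟩
    · exact absurd rfl (hhd r)

lemma parseB : ∀ N (l : List Bool), l.length ≤ N → ¬ ([false, false] <:+: l) →
    (∀ r, l ≠ r ++ [false]) → ∃ x, l = psiB x := by
  intro N
  induction N with
  | zero =>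
    intro l hl _ _
    have : l = [] := List.length_eq_zero_iff.1 (Nat.le_zero.1 hl)
    exact ⟨[], by simp [this]⟩
  | succ n ih =>
    intro l hl h00 hlast
    rcases l with _ | ⟨a, r⟩
    · exact ⟨[], rfl⟩
    rcases a with _ | _
    · -- false :: r
      rcases r with _ | ⟨b, r'⟩
      · exact absurd rfl (hlast [])
      rcases b with _ | _
      · exact absurd (⟨[], r', by simp⟩ : [false,false] <:+: (false :: false :: r')) h00
      · -- false :: true :: r'
        obtain ⟨x, hx⟩ := ih r' (by simp at hl ⊢; omega)
          (fun hh => h00 (hh.trans ⟨[false, true], [], by simp⟩))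
          (fun s hs => hlast (false :: true :: s) (by simp [hs]))
        exact ⟨false :: x, by simp [psiB_cons, ← hx]⟩
    · -- true :: r
      obtain ⟨x, hx⟩ := ih r (by simp at hl ⊢; omega)
        (fun hh => h00 (hh.trans ⟨[true], [], by simp⟩))
        (fun s hs => hlast (true :: s) (by simp [hs]))
      exact ⟨true :: x, by simp [psiB_cons, ← hx]⟩
lemma psiB_count_false (x : List Bool) : (psiB x).count false = x.count false := by
  induction x with
  | nil => simp
  | cons a t ih => cases a <;> simp [List.count_cons, ih]

lemma psiA_consF (x : List Bool) : psiA (false :: x) = false :: psiA x := rfl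
lemma psiA_consT (x : List Bool) : psiA (true :: x) = false :: true :: psiA x := rfl
lemma psiB_consF (x : List Bool) : psiB (false :: x) = false :: true :: psiB x := rfl
lemma psiB_consT (x : List Bool) : psiB (true :: x) = true :: psiB x := rfl

lemma lemA_decomp : ∀ (x : List Bool) (k : ℕ), k ≤ (psiA x).length →
    ∃ i, i ≤ x.length ∧
      ((k = i + (x.take i).count true ∧ ((psiA x).take k).count true = (x.take i).count true) ∨
       (k = i + (x.take i).count true + 1 ∧
         ((psiA x).take k).count true = (x.take i).count true)) := by
  intro x
  induction x with
  | nil => intro k hk; simp [psiA] at hk; exact ⟨0, by simp [hk, psiA]⟩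
  | cons a r ih =>
    intro k hk
    rcases k with _ | k
    · exact ⟨0, by simp⟩
    cases a
    · rw [psiA_consF] at hk ⊢
      obtain ⟨i, hi, hcase⟩ := ih k (by simpa using hk)
      refine ⟨i + 1, by simpa using hi, ?_⟩
      have ht : ((false :: r).take (i+1)).count true = (r.take i).count true := by
        simp [List.count_cons]
      have ht2 : ((false :: psiA r).take (k+1)).count true = ((psiA r).take k).count true := by
        simp [List.count_cons]
      rcases hcase with ⟨h1, h2⟩ | ⟨h1, h2⟩
      · exact Or.inl ⟨by rw [ht]; omega, by rw [ht2, h2, ht]⟩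
      · exact Or.inr ⟨by rw [ht]; omega, by rw [ht2, h2, ht]⟩
    · rw [psiA_consT] at hk ⊢
      rcases k with _ | k
      · exact ⟨0, by simp, Or.inr ⟨by simp, by simp⟩⟩
      · obtain ⟨i, hi, hcase⟩ := ih k (by simp at hk; omega)
        refine ⟨i + 1, by simpa using hi, ?_⟩
        have ht : ((true :: r).take (i+1)).count true = (r.take i).count true + 1 := by
          simp [List.count_cons]
        have ht2 : ((false :: true :: psiA r).take (k+1+1)).count true
            = ((psiA r).take k).count true + 1 := by
          simp [List.count_cons]
        rcases hcase with ⟨h1, h2⟩ | ⟨h1, h2⟩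
        · exact Or.inl ⟨by rw [ht]; omega, by rw [ht2, h2, ht]⟩
        · exact Or.inr ⟨by rw [ht]; omega, by rw [ht2, h2, ht]⟩

lemma lemB_decomp : ∀ (x : List Bool) (k : ℕ), k ≤ (psiB x).length →
    ∃ i, i ≤ x.length ∧
      ((k = i + (x.take i).count false ∧ ((psiB x).take k).count true = i) ∨
       (k = i + (x.take i).count false + 1 ∧
         (x.take (i+1)).count false = (x.take i).count false + 1 ∧ i < x.length ∧
         ((psiB x).take k).count true = i)) := by
  intro x
  induction x with
  | nil => intro k hk; simp [psiB] at hk; exact ⟨0, by simp [hk, psiB]⟩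
  | cons a r ih =>
    intro k hk
    rcases k with _ | k
    · exact ⟨0, by simp⟩
    cases a
    · rw [psiB_consF] at hk ⊢
      rcases k with _ | k
      · refine ⟨0, by simp, Or.inr ⟨by simp, by simp [List.count_cons], by simp, by simp⟩⟩
      · obtain ⟨i, hi, hcase⟩ := ih k (by simp at hk; omega)
        refine ⟨i + 1, by simpa using hi, ?_⟩
        have ht : ((false :: r).take (i+1)).count false = (r.take i).count false + 1 := by
          simp [List.count_cons]
        have ht1 : ((false :: r).take (i+1+1)).count false = (r.take (i+1)).count false + 1 := by
          simp [List.count_cons]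
        have ht2 : ((false :: true :: psiB r).take (k+1+1)).count true
            = ((psiB r).take k).count true + 1 := by
          simp [List.count_cons]
        rcases hcase with ⟨h1, h2⟩ | ⟨h1, h2, h3, h4⟩
        · exact Or.inl ⟨by rw [ht]; omega, by rw [ht2, h2]⟩
        · exact Or.inr ⟨by rw [ht]; omega, by rw [ht1, ht]; omega, by simpa using h3,
            by rw [ht2, h4]⟩
    · rw [psiB_consT] at hk ⊢
      obtain ⟨i, hi, hcase⟩ := ih k (by simpa using hk)
      refine ⟨i + 1, by simpa using hi, ?_⟩
      have ht : ((true :: r).take (i+1)).count false = (r.take i).count false := by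
        simp [List.count_cons]
      have ht1 : ((true :: r).take (i+1+1)).count false = (r.take (i+1)).count false := by
        simp [List.count_cons]
      have ht2 : ((true :: psiB r).take (k+1)).count true
          = ((psiB r).take k).count true + 1 := by
        simp [List.count_cons]
      rcases hcase with ⟨h1, h2⟩ | ⟨h1, h2, h3, h4⟩
      · exact Or.inl ⟨by rw [ht]; omega, by rw [ht2, h2]⟩
      · exact Or.inr ⟨by rw [ht]; omega, by rw [ht1, ht]; omega, by simpa using h3,
          by rw [ht2, h4]⟩
lemma lyndon_head {l : List Bool} (h : Lyndon l) (hl : 2 ≤ l.length) :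
    ∃ t, l = false :: t := by
  obtain ⟨q, c, hqc⟩ := l.eq_nil_or_concat.resolve_left (by
    intro hh; rw [hh] at hl; simp at hl)
  rw [List.concat_eq_append] at hqc
  have hq : q ≠ [] := by
    intro hh; rw [hh] at hqc; rw [hqc] at hl; simp at hl
  have hlex := h.2 q [c] hqc hq (by simp)
  rcases l with _ | ⟨a, t⟩
  · exact absurd rfl h.1
  · refine ⟨t, ?_⟩
    cases hlex with
    | cons h' => cases h'
    | rel h' =>
      have : a = false := by revert h'; cases a <;> cases c <;> decide
      rw [this]

lemma lyndon_last {l : List Bool} (h : Lyndon l) (hl : 2 ≤ l.length) :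
    ∀ r, l ≠ r ++ [false] := by
  intro r hr
  have hq : r ≠ [] := by
    intro hh; rw [hh] at hr; rw [hr] at hl; simp at hl
  have hlex := h.2 r [false] hr hq (by simp)
  obtain ⟨t, ht⟩ := lyndon_head h hl
  rw [ht] at hlex
  cases hlex with
  | cons h' => cases h'
  | rel h' => exact absurd h' (by decide)

lemma lyndon_psiA {x : List Bool} (h : Lyndon (psiA x)) (hx : x ≠ []) : Lyndon x := by
  refine ⟨hx, ?_⟩
  intro u v huv hu hv
  have hlex : List.Lex (·<·) (psiA x) (psiA v) :=
    h.2 (psiA u) (psiA v) (by rw [huv, psiA_append]) (psiA_ne_nil hu) (psiA_ne_nil hv)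
  rcases trichotomous_of (List.Lex (·<·)) x v with h1 | h1 | h1
  · exact h1
  · exfalso
    rw [h1] at huv
    have := congrArg (fun z => (psiA z).length) huv
    simp only [psiA_append, List.length_append] at this
    have hne := psiA_ne_nil hu
    have : (psiA u).length = 0 := by omega
    exact hne (List.length_eq_zero_iff.1 this)
  · exact absurd (List.lex_trans (r := (·<·)) (fun h1 h2 => lt_trans h1 h2) hlex (psiA_lex h1)) (irrefl_of (List.Lex (·<·)) (psiA x))

lemma lyndon_psiB {x : List Bool} (h : Lyndon (psiB x)) (hx : x ≠ []) : Lyndon x := by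
  refine ⟨hx, ?_⟩
  intro u v huv hu hv
  have hlex : List.Lex (·<·) (psiB x) (psiB v) :=
    h.2 (psiB u) (psiB v) (by rw [huv, psiB_append]) (psiB_ne_nil hu) (psiB_ne_nil hv)
  rcases trichotomous_of (List.Lex (·<·)) x v with h1 | h1 | h1
  · exact h1
  · exfalso
    rw [h1] at huv
    have := congrArg (fun z => (psiB z).length) huv
    simp only [psiB_append, List.length_append] at this
    have hne := psiB_ne_nil hu
    have : (psiB u).length = 0 := by omega
    exact hne (List.length_eq_zero_iff.1 this)
  · exact absurd (List.lex_trans (r := (·<·)) (fun h1 h2 => lt_trans h1 h2) hlex (psiB_lex h1)) (irrefl_of (List.Lex (·<·)) (psiB x))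

lemma balanced_psiA {x : List Bool} (hb : Balanced01 (psiA x))
    (hlast : ∀ r, psiA x ≠ r ++ [false]) : Balanced01 x := by
  by_contra h
  obtain ⟨t, h0, h1⟩ := unbalanced_pair h
  -- u₀ = true :: psiA t ++ [false, true] infix of psiA x
  obtain ⟨e, f, hef⟩ := h1
  have hu0 : (true :: (psiA t ++ [false]) ++ [true]) <:+: psiA x := by
    rw [← hef, psiA_append, psiA_append]
    refine ⟨psiA e ++ [false], psiA f, ?_⟩
    have : psiA (true :: (t ++ [true])) = false :: true :: psiA t ++ [false, true] := by
      rw [psiA_consT, psiA_append]; rfl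
    rw [this]
    simp
  obtain ⟨e', f', hef'⟩ := h0
  have hf' : f' ≠ [] := by
    intro hh
    rw [hh] at hef'
    apply hlast (psiA e' ++ (false :: psiA t))
    rw [← hef']
    simp only [List.append_nil, psiA_append]
    have h2 : psiA (false :: (t ++ [false])) = false :: psiA t ++ [false] := by
      rw [psiA_consF, psiA_append]; rfl
    rw [h2]
    simp
  obtain ⟨g, hg⟩ := psiA_head hf'
  have hv0 : (false :: (psiA t ++ [false]) ++ [false]) <:+: psiA x := by
    rw [← hef', psiA_append, psiA_append, hg]
    refine ⟨psiA e', g, ?_⟩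
    have : psiA (false :: (t ++ [false])) = false :: psiA t ++ [false] := by
      rw [psiA_consF, psiA_append]; rfl
    rw [this]
    simp
  have := hb _ _ hu0 hv0 (by simp)
  simp [List.count_cons, List.count_append] at this
  omega

lemma balanced_psiB {x : List Bool} (hb : Balanced01 (psiB x))
    (hhead : ∀ r, psiB x ≠ true :: r) : Balanced01 x := by
  by_contra h
  obtain ⟨t, h0, h1⟩ := unbalanced_pair h
  obtain ⟨e, f, hef⟩ := h1
  have he : e ≠ [] := by
    intro hh
    rw [hh] at hef
    apply hhead (psiB (t ++ [true]) ++ psiB f)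
    rw [← hef]
    simp only [List.nil_append]
    rw [psiB_append, psiB_consT]
    simp
  obtain ⟨g, hg⟩ := psiB_last he
  have hu0 : (true :: (true :: psiB t) ++ [true]) <:+: psiB x := by
    rw [← hef, psiB_append, psiB_append, hg]
    refine ⟨g, psiB f, ?_⟩
    have : psiB (true :: (t ++ [true])) = true :: psiB t ++ [true] := by
      rw [psiB_consT, psiB_append]; rfl
    rw [this]
    simp
  obtain ⟨e', f', hef'⟩ := h0
  have hv0 : (false :: (true :: psiB t) ++ [false]) <:+: psiB x := by
    rw [← hef', psiB_append, psiB_append]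
    refine ⟨psiB e', true :: psiB f', ?_⟩
    have : psiB (false :: (t ++ [false])) = false :: true :: psiB t ++ [false, true] := by
      rw [psiB_consF, psiB_append]; rfl
    rw [this]
    simp
  have := hb _ _ hu0 hv0 (by simp)
  simp [List.count_cons, List.count_append] at this
  omega
lemma count_tf (u : List Bool) : u.count true + u.count false = u.length := by
  induction u with
  | nil => simp
  | cons a t ih => cases a <;> simp [List.count_cons] <;> omega

lemma count_take_tf {u : List Bool} {i : ℕ} (h : i ≤ u.length) :
    (u.take i).count true + (u.take i).count false = i := by
  rw [count_tf, List.length_take]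
  omega

theorem chr_bounds : ∀ N (l : List Bool), l.length ≤ N → Lyndon l → Balanced01 l →
    ∀ i, i ≤ l.length → (l.take i).count true * l.length ≤ i * l.count true ∧
      i * l.count true < ((l.take i).count true + 1) * l.length := by
  intro N
  induction N with
  | zero =>
    intro l hl hLyn _
    exact absurd (List.length_eq_zero_iff.1 (Nat.le_zero.1 hl)) hLyn.1
  | succ n ih =>
    intro l hl hLyn hbal i0 hi0
    by_cases hsmall : l.length ≤ 1
    · -- l = [c]
      rcases l with _ | ⟨c, l'⟩
      · exact absurd rfl hLyn.1
      rcases l' with _ | ⟨d, l''⟩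
      · rcases i0 with _ | i0
        · simp
        · have : i0 = 0 := by simp at hi0; omega
          subst this
          cases c <;> simp
      · simp at hsmall
    · push_neg at hsmall
      have h2 : 2 ≤ l.length := hsmall
      obtain ⟨t0, ht0⟩ := lyndon_head hLyn h2
      have hlast := lyndon_last hLyn h2
      have hhead : ∀ r, l ≠ true :: r := by
        intro r hr; rw [ht0] at hr; simp at hr
      have hcnt_pos : 1 ≤ l.count true := by
        obtain ⟨q, c, hqc⟩ := l.eq_nil_or_concat.resolve_left hLyn.1
        rw [List.concat_eq_append] at hqc
        have hc : c = true := by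
          cases c
          · exact absurd hqc (hlast q)
          · rfl
        rw [hqc, hc, List.count_append]
        simp
      have hcf_pos : 1 ≤ l.count false := by
        rw [ht0, List.count_cons]
        simp
      by_cases h11 : [true, true] <:+: l
      · -- no 00, use psiB
        have h00 : ¬ [false, false] <:+: l := by
          intro h00
          have := hbal [true, true] [false, false] h11 h00 rfl
          simp [List.count_cons] at this
        obtain ⟨x, hx⟩ := parseB l.length l le_rfl h00 hlast
        subst hx
        have hxne : x ≠ [] := by
          rintro rfl
          simp [psiB] at h2
        have hlt : x.length < (psiB x).length := by
          rw [psiB_length]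
          have : 1 ≤ x.count false := by rw [← psiB_count_false]; exact hcf_pos
          omega
        have hLx : Lyndon x := lyndon_psiB hLyn hxne
        have hBx : Balanced01 x := balanced_psiB hbal hhead
        have h1f : 1 ≤ x.count false := by rw [← psiB_count_false]; exact hcf_pos
        have IH := ih x (by rw [psiB_length] at hl; omega) hLx hBx
        obtain ⟨i, hi, hcase⟩ := lemB_decomp x i0 hi0
        obtain ⟨ih1, ih2⟩ := IH i hi
        have hitf := count_take_tf (u := x) hi
        have e1 : i * (x.count true + x.count false) = i * x.length := by rw [count_tf]
        have e2 : ((x.take i).count true + (x.take i).count false) * x.length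
            = i * x.length := by rw [hitf]
        rw [psiB_length, psiB_count]
        rcases hcase with ⟨hk1, hk2⟩ | ⟨hk1, hlet, hilt, hk2⟩
        · rw [hk2, hk1]
          constructor
          · linarith [ih1, e1, e2]
          · linarith [ih2, e1, e2]
        · obtain ⟨ih3, ih4⟩ := IH (i+1) (by omega)
          have hitf1 := count_take_tf (u := x) (i := i + 1) (by omega)
          have hht : (x.take (i+1)).count true = (x.take i).count true := by omega
          rw [hht] at ih3 ih4
          have e3 : (i+1) * (x.count true + x.count false) = (i+1) * x.length := by
            rw [count_tf]
          have e4 : ((x.take i).count true + (x.take i).count false + 1) * x.length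
              = (i+1) * x.length := by rw [hitf]
          rw [hk2, hk1]
          constructor
          · linarith [ih1, e1, e2]
          · linarith [ih4, e3, e4]
      · -- no 11, use psiA
        obtain ⟨x, hx⟩ := parseA l.length l le_rfl h11 hhead
        subst hx
        have hxne : x ≠ [] := by
          rintro rfl
          simp [psiA] at h2
        have hlt : x.length < (psiA x).length := by
          rw [psiA_length, ← psiA_count]
          omega
        have hLx : Lyndon x := lyndon_psiA hLyn hxne
        have hBx : Balanced01 x := balanced_psiA hbal hlast
        have h1t : 1 ≤ x.count true := by rw [← psiA_count]; exact hcnt_pos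
        have IH := ih x (by rw [psiA_length] at hl; omega) hLx hBx
        obtain ⟨i, hi, hcase⟩ := lemA_decomp x i0 hi0
        obtain ⟨ih1, ih2⟩ := IH i hi
        rw [psiA_length, psiA_count]
        rcases hcase with ⟨hk1, hk2⟩ | ⟨hk1, hk2⟩
        · rw [hk2, hk1]
          constructor
          · linarith [ih1]
          · linarith [ih2]
        · rw [hk2, hk1]
          constructor
          · linarith [ih1]
          · linarith [ih2]
lemma slope_of_lex {a b : List Bool} (ha : Lyndon a) (hab : Balanced01 a)
    (hb : Lyndon b) (hbb : Balanced01 b) (h : List.Lex (·<·) b a) :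
    b.count true * a.length ≤ a.count true * b.length := by
  have hna : 1 ≤ a.length := by
    rcases a with _ | _
    · exact absurd rfl ha.1
    · simp
  have hnb : 1 ≤ b.length := by
    rcases b with _ | _
    · exact absurd rfl hb.1
    · simp
  have Ba := chr_bounds a.length a le_rfl ha hab
  have Bb := chr_bounds b.length b le_rfl hb hbb
  rcases lex_char.1 h with ⟨⟨r, hr⟩, hne⟩ | ⟨s, t, t', hbs, has⟩
  · -- b prefix of a
    have hlb : b.length ≤ a.length := by rw [← hr]; simp
    have htake : a.take b.length = b := by rw [← hr]; exact List.take_left (l₁ := b) (l₂ := r)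
    have := (Ba b.length hlb).1
    rw [htake] at this
    linarith [this]
  · -- b = s ++ 0 t,  a = s ++ 1 t'
    set i := s.length with hi
    have hib : i + 1 ≤ b.length := by rw [hbs]; simp; omega
    have hia : i + 1 ≤ a.length := by rw [has]; simp; omega
    have htb : b.take (i+1) = s ++ [false] := by
      rw [hbs]
      rw [List.take_append]
      simp [hi]
    have hta : a.take (i+1) = s ++ [true] := by
      rw [has]
      rw [List.take_append]
      simp [hi]
    have hcb : (b.take (i+1)).count true = s.count true := by
      rw [htb, List.count_append]; simp
    have hca : (a.take (i+1)).count true = s.count true + 1 := by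
      rw [hta, List.count_append]; simp
    have h1 := (Bb (i+1) hib).2   -- (i+1) * pb < (c+1) * nb
    have h2 := (Ba (i+1) hia).1   -- (c+1) * na ≤ (i+1) * pa
    rw [hcb] at h1
    rw [hca] at h2
    -- (i+1) pb na < (c+1) nb na ≤ (i+1) pa nb
    have h3 : (i+1) * b.count true * a.length < (i+1) * (a.count true * b.length) := by
      calc (i+1) * b.count true * a.length
        < (s.count true + 1) * b.length * a.length :=
          Nat.mul_lt_mul_of_lt_of_le h1 le_rfl (by omega)
      _ = ((s.count true + 1) * a.length) * b.length := by ring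
      _ ≤ ((i+1) * a.count true) * b.length := Nat.mul_le_mul_right _ h2
      _ = (i+1) * (a.count true * b.length) := by ring
    have := Nat.lt_of_mul_lt_mul_left (a := i+1)
      (by calc (i+1) * (b.count true * a.length) = (i+1) * b.count true * a.length := by ring
            _ < (i+1) * (a.count true * b.length) := h3)
    omega

lemma slope_mono {a b : List Bool} (ha : Lyndon a) (hab : Balanced01 a)
    (hb : Lyndon b) (hbb : Balanced01 b) (h : ¬ List.Lex (·<·) a b) :
    b.count true * a.length ≤ a.count true * b.length := by
  rcases trichotomous_of (List.Lex (·<·)) a b with h1 | h1 | h1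
  · exact absurd h1 h
  · rw [h1]
  · exact slope_of_lex ha hab hb hbb h1

noncomputable def slopeQ (l : List Bool) : ℚ := (l.count true : ℚ) / (l.length : ℚ)

noncomputable def DD : List (List Bool) → ℕ → ℚ
  | [], _ => 0
  | l :: L, x => if x < l.length then slopeQ l else DD L (x - l.length)

noncomputable def GG (L : List (List Bool)) (x : ℕ) : ℚ := ∑ u ∈ Finset.range x, DD L u

lemma DD_le (c : ℚ) : ∀ L : List (List Bool), (∀ m ∈ L, slopeQ m ≤ c) →
    ∀ z, z < (L.flatten).length → DD L z ≤ c := by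
  intro L
  induction L with
  | nil => intro _ z hz; simp at hz
  | cons l L ih =>
    intro hm z hz
    rw [DD]
    split_ifs with hzl
    · exact hm l (by simp)
    · apply ih (fun m hm' => hm m (by simp [hm']))
      rw [List.flatten_cons, List.length_append] at hz
      omega

lemma DD_antitone : ∀ (L : List (List Bool)),
    List.Pairwise (fun a b => slopeQ b ≤ slopeQ a) L →
    ∀ x y, x ≤ y → y < (L.flatten).length → DD L y ≤ DD L x := by
  intro L
  induction L with
  | nil => intro _ x y _ hy; simp at hy
  | cons l L ih =>
    intro hpw x y hxy hy
    rw [List.pairwise_cons] at hpw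
    rw [DD, DD]
    split_ifs with h1 h2 h2
    · exact le_refl _
    · omega
    · -- x < |l| ≤ y
      apply DD_le _ _ hpw.1
      rw [List.flatten_cons, List.length_append] at hy
      omega
    · apply ih hpw.2 _ _ (by omega)
      rw [List.flatten_cons, List.length_append] at hy
      omega

lemma GG_increment (L : List (List Bool))
    (hpw : List.Pairwise (fun a b => slopeQ b ≤ slopeQ a) L)
    {x y m : ℕ} (hxy : x ≤ y) (hym : y + m ≤ (L.flatten).length) :
    GG L (y + m) - GG L y ≤ GG L (x + m) - GG L x := by
  have hy : GG L (y + m) = GG L y + ∑ u ∈ Finset.range m, DD L (y + u) :=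
    Finset.sum_range_add (DD L) y m
  have hx : GG L (x + m) = GG L x + ∑ u ∈ Finset.range m, DD L (x + u) :=
    Finset.sum_range_add (DD L) x m
  rw [hy, hx]
  have : ∑ u ∈ Finset.range m, DD L (y + u) ≤ ∑ u ∈ Finset.range m, DD L (x + u) := by
    apply Finset.sum_le_sum
    intro u hu
    simp at hu
    exact DD_antitone L hpw (x + u) (y + u) (by omega) (by omega)
  linarith

lemma GG_sandwich : ∀ (L : List (List Bool)), (∀ l ∈ L, Lyndon l ∧ Balanced01 l) →
    ∀ x, x ≤ (L.flatten).length →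
      ((((L.flatten).take x).count true : ℚ) ≤ GG L x ∧
        GG L x < (((L.flatten).take x).count true : ℚ) + 1) := by
  intro L
  induction L with
  | nil => intro _ x hx; simp at hx; simp [hx, GG]
  | cons l L ih =>
    intro hmem x hx
    have hl := hmem l (by simp)
    have hn : 1 ≤ l.length := by
      rcases l with _ | _
      · exact absurd rfl hl.1.1
      · simp
    have hnQ : (0 : ℚ) < (l.length : ℚ) := by exact_mod_cast hn
    by_cases hxl : x ≤ l.length
    · have hDD : ∀ u ∈ Finset.range x, DD (l :: L) u = slopeQ l := by
        intro u hu
        simp at hu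
        rw [DD, if_pos (by omega)]
      have hGG : GG (l :: L) x = (x : ℚ) * slopeQ l := by
        rw [GG, Finset.sum_congr rfl hDD, Finset.sum_const, Finset.card_range, nsmul_eq_mul]
      have htake : ((l :: L).flatten).take x = l.take x := by
        rw [List.flatten_cons, List.take_append_of_le_length hxl]
      obtain ⟨hb1, hb2⟩ := chr_bounds l.length l le_rfl hl.1 hl.2 x hxl
      rw [hGG, htake]
      constructor
      · rw [slopeQ, ← mul_div_assoc, le_div_iff₀ hnQ]
        exact_mod_cast hb1
      · rw [slopeQ, ← mul_div_assoc, div_lt_iff₀ hnQ]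
        push_cast
        exact_mod_cast hb2
    · push_neg at hxl
      set m := x - l.length with hm
      have hxm : x = l.length + m := by omega
      have hGG : GG (l :: L) x = (l.count true : ℚ) + GG L m := by
        rw [GG, hxm, Finset.sum_range_add]
        congr 1
        · have : ∀ u ∈ Finset.range l.length, DD (l :: L) u = slopeQ l := by
            intro u hu; simp at hu; rw [DD, if_pos hu]
          rw [Finset.sum_congr rfl this, Finset.sum_const, Finset.card_range, nsmul_eq_mul,
            slopeQ, mul_comm, div_mul_cancel₀ _ (ne_of_gt hnQ)]
        · apply Finset.sum_congr rfl
          intro u hu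
          rw [DD, if_neg (by omega)]
          congr 1
          omega
      have hmL : m ≤ (L.flatten).length := by
        rw [List.flatten_cons, List.length_append] at hx
        omega
      have htake : ((l :: L).flatten).take x = l ++ (L.flatten).take m := by
        rw [List.flatten_cons, List.take_append,
          List.take_of_length_le (by omega), hm]
      have hcount : (((l :: L).flatten).take x).count true
          = l.count true + ((L.flatten).take m).count true := by
        rw [htake, List.count_append]
      obtain ⟨ih1, ih2⟩ := ih (fun m hm' => hmem m (by simp [hm'])) m hmL
      rw [hGG, hcount]
      push_cast
      constructor
      · linarith
      · linarith

lemma chain_slope : ∀ L : List (List Bool), (∀ l ∈ L, Lyndon l ∧ Balanced01 l) →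
    L.Chain' (fun a b => ¬ List.Lex (·<·) a b) →
    L.Chain' (fun a b => slopeQ b ≤ slopeQ a) := by
  intro L
  induction L with
  | nil => intro _ _; exact List.isChain_nil
  | cons a T ih =>
    intro hmem hch
    rcases T with _ | ⟨b, T'⟩
    · exact List.isChain_singleton a
    · rw [List.Chain', List.isChain_cons_cons] at hch ⊢
      refine ⟨?_, ih (fun l hl => hmem l (by simp [hl])) hch.2⟩
      have ha := hmem a (by simp)
      have hb := hmem b (by simp)
      have hs := slope_mono ha.1 ha.2 hb.1 hb.2 hch.1
      have hna : (0:ℚ) < a.length := by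
        have : 1 ≤ a.length := by
          rcases a with _ | _
          · exact absurd rfl ha.1.1
          · simp
        exact_mod_cast this
      have hnb : (0:ℚ) < b.length := by
        have : 1 ≤ b.length := by
          rcases b with _ | _
          · exact absurd rfl hb.1.1
          · simp
        exact_mod_cast this
      rw [slopeQ, slopeQ, div_le_div_iff₀ hnb hna]
      exact_mod_cast hs

lemma pairwise_slope (L : List (List Bool)) (hmem : ∀ l ∈ L, Lyndon l ∧ Balanced01 l)
    (hch : L.Chain' (fun a b => ¬ List.Lex (·<·) a b)) :
    List.Pairwise (fun a b => slopeQ b ≤ slopeQ a) L := by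
  haveI : IsTrans (List Bool) (fun a b => slopeQ b ≤ slopeQ a) :=
    ⟨fun a b c h1 h2 => le_trans h2 h1⟩
  exact List.isChain_iff_pairwise.1 (chain_slope L hmem hch)

lemma claimA {w : List Bool} (hDC : DC w) {i j m : ℕ} (hij : i ≤ j)
    (hjm : j + m ≤ w.length) :
    (w.take (j+m)).count true + (w.take i).count true
      ≤ (w.take (i+m)).count true + (w.take j).count true + 1 := by
  obtain ⟨L, hflat, hmem, hch⟩ := hDC
  subst hflat
  have hpw := pairwise_slope L hmem hch
  have hinc := GG_increment L hpw hij hjm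
  obtain ⟨s1a, s1b⟩ := GG_sandwich L hmem i (by omega)
  obtain ⟨s2a, s2b⟩ := GG_sandwich L hmem (i+m) (by omega)
  obtain ⟨s3a, s3b⟩ := GG_sandwich L hmem j (by omega)
  obtain ⟨s4a, s4b⟩ := GG_sandwich L hmem (j+m) (by omega)
  have hq : (((L.flatten.take (j+m)).count true : ℚ) + (L.flatten.take i).count true)
      < ((L.flatten.take (i+m)).count true : ℚ) + (L.flatten.take j).count true + 2 := by
    linarith
  have hn : (L.flatten.take (j+m)).count true + (L.flatten.take i).count true
      < (L.flatten.take (i+m)).count true + (L.flatten.take j).count true + 2 := by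
    exact_mod_cast hq
  omega
lemma window {u w : List Bool} (h : u <:+: w) :
    ∃ i, i + u.length ≤ w.length ∧
      (w.take (i + u.length)).count true = (w.take i).count true + u.count true := by
  obtain ⟨s, t, hst⟩ := h
  refine ⟨s.length, ?_, ?_⟩
  · rw [← hst]; simp
  · have h1 : w.take (s.length + u.length) = s ++ u := by
      rw [← hst, ← List.length_append]
      rw [List.take_append_of_le_length (by simp), List.take_of_length_le le_rfl]
    have h2 : w.take s.length = s := by
      rw [← hst, List.append_assoc, List.take_left]
    rw [h1, h2, List.count_append]

lemma mnot_take_count {w : List Bool} {x : ℕ} (hx : x ≤ w.length) :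
    ((mnot w).take x).count true = x - (w.take x).count true := by
  have h1 : (mnot w).take x = mnot (w.take x) := (List.map_take (f := not)).symm
  rw [h1, mnot_count, List.length_take]
  congr 1
  omega

lemma take_count_le (w : List Bool) (x : ℕ) : (w.take x).count true ≤ x := by
  have := List.count_le_length (a := true) (l := w.take x)
  have := List.length_take_le x w
  omega


end AuxProofs

/-- A binary word is balanced iff it is both upward and downward digitally convex. -/
theorem stmt12 (w : List Bool) : Balanced01 w ↔ DC w ∧ DCdown w := by
  constructor
  · intro h
    exact ⟨balanced_DC h, balanced_DCdown h⟩
  · rintro ⟨hdc, hdcd⟩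
    intro u v hu hv hlen
    obtain ⟨i, hiu, hcu⟩ := window hu
    obtain ⟨j, hjv, hcv⟩ := window hv
    rw [hlen] at hiu hcu
    set m := v.length with hm
    rcases le_total j i with hji | hij
    · have hA := claimA hdc (i := j) (j := i) (m := m) hji hiu
      omega
    · have hdc' : DC (mnot w) := DCdown_iff_DC_mnot.1 hdcd
      have hA := claimA hdc' (i := i) (j := j) (m := m) hij
        (by rw [mnot_length]; exact hjv)
      rw [mnot_take_count (by omega), mnot_take_count (by omega),
        mnot_take_count (by omega), mnot_take_count (by omega)] at hA
      have b1 := take_count_le w (j+m)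
      have b2 := take_count_le w i
      have b3 := take_count_le w (i+m)
      have b4 := take_count_le w j
      have hmono1 : (w.take i).count true ≤ (w.take (i+m)).count true := by
        rw [hcu]; omega
      have hmono2 : (w.take j).count true ≤ (w.take (j+m)).count true := by
        rw [hcv]; omega
      omega
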